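/- Let {B(k)}_{k∈ℕ} be a sequence of n×n column-stochastic real matrices, let T ≥ 1 be an integer and θ ∈ (0, 1], and suppose that for every k ∈ ℕ every entry of the product Φ_T(k) = B(k+T−1)B(k+T−2)···B(k) is at least θ. Then for every k and t there exists a stochastic vector φ_t(k) ∈ ℝ^n such that |[Φ_t(k)]_{ij} − [φ_t(k)]_i| ≤ 2(1 − θ)^{⌊t/T⌋} for all i, j; that is, the products Φ_t(k) approach a rank-one matrix φ_t(k)·1ᵀ at a geometric rate in t. -/
import Mathlib


/-- Backward product of a sequence of matrices:
`backProd B t k = B(k+t−1)·B(k+t−2)···B(k)`, with `backProd B 0 k = I`. -/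
def backProd {n : ℕ} (B : ℕ → Matrix (Fin n) (Fin n) ℝ) : ℕ → ℕ → Matrix (Fin n) (Fin n) ℝ
  | 0, _ => 1
  | t + 1, k => B (k + t) * backProd B t k

namespace ColStochAux

variable {n : ℕ}

lemma backProd_add (B : ℕ → Matrix (Fin n) (Fin n) ℝ) (a b k : ℕ) :
    backProd B (a + b) k = backProd B a (k + b) * backProd B b k := by
  induction a with
  | zero => simp [backProd]
  | succ a ih =>
      have h1 : a + 1 + b = (a + b) + 1 := by ring
      rw [h1]
      show B (k + (a + b)) * backProd B (a + b) k = _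
      rw [ih]
      show _ = B (k + b + a) * backProd B a (k + b) * backProd B b k
      rw [show k + (a + b) = k + b + a from by ring, Matrix.mul_assoc]

lemma backProd_nonneg (B : ℕ → Matrix (Fin n) (Fin n) ℝ)
    (hnonneg : ∀ k i j, 0 ≤ B k i j) (t k : ℕ) (i j : Fin n) :
    0 ≤ backProd B t k i j := by
  induction t generalizing i j with
  | zero =>
      show (0:ℝ) ≤ (1 : Matrix (Fin n) (Fin n) ℝ) i j
      by_cases h : i = j <;> simp [Matrix.one_apply, h]
  | succ t ih =>
      show (0:ℝ) ≤ (B (k + t) * backProd B t k) i j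
      rw [Matrix.mul_apply]
      exact Finset.sum_nonneg fun l _ => mul_nonneg (hnonneg _ _ _) (ih _ _)

lemma backProd_col (B : ℕ → Matrix (Fin n) (Fin n) ℝ)
    (hcol : ∀ k j, ∑ i, B k i j = 1) (t k : ℕ) (j : Fin n) :
    ∑ i, backProd B t k i j = 1 := by
  induction t generalizing j with
  | zero =>
      show ∑ i, (1 : Matrix (Fin n) (Fin n) ℝ) i j = 1
      simp [Matrix.one_apply]
  | succ t ih =>
      show ∑ i, (B (k + t) * backProd B t k) i j = 1
      simp only [Matrix.mul_apply]
      rw [Finset.sum_comm]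
      have : ∀ l ∈ Finset.univ, ∑ i, B (k + t) i l * backProd B t k l j
          = backProd B t k l j := by
        intro l _
        rw [← Finset.sum_mul, hcol, one_mul]
      rw [Finset.sum_congr rfl this, ih]

lemma entry_le_one (B : ℕ → Matrix (Fin n) (Fin n) ℝ)
    (hnonneg : ∀ k i j, 0 ≤ B k i j) (hcol : ∀ k j, ∑ i, B k i j = 1)
    (t k : ℕ) (i j : Fin n) : backProd B t k i j ≤ 1 := by
  calc backProd B t k i j ≤ ∑ l, backProd B t k l j :=
        Finset.single_le_sum (fun l _ => backProd_nonneg B hnonneg t k l j)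
          (Finset.mem_univ i)
    _ = 1 := backProd_col B hcol t k j

/-- Contraction lemma: multiplying on the right by a column-stochastic matrix
with entries ≥ θ shrinks row oscillations by a factor `1 - θ`. -/
lemma contract (hn : 0 < n) {M D : Matrix (Fin n) (Fin n) ℝ} {θ c : ℝ}
    (hc : 0 ≤ c) (hθ : 0 ≤ θ)
    (hM : ∀ i j j', M i j - M i j' ≤ c)
    (hMnn : ∀ i j, 0 ≤ M i j)
    (hDθ : ∀ i j, θ ≤ D i j) (hDcol : ∀ j, ∑ i, D i j = 1) :
    ∀ i j j', (M * D) i j - (M * D) i j' ≤ (1 - θ) * c := by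
  intro i j j'
  obtain ⟨l0, -, hl0⟩ := Finset.exists_min_image Finset.univ (fun l => M i l)
    ⟨⟨0, hn⟩, Finset.mem_univ _⟩
  set m := M i l0 with hm
  have hsum0 : ∑ l, (D l j - D l j') = 0 := by
    rw [Finset.sum_sub_distrib, hDcol, hDcol]; ring
  have key : (M * D) i j - (M * D) i j'
      = ∑ l, (M i l - m) * (D l j - D l j') := by
    simp only [Matrix.mul_apply]
    rw [← Finset.sum_sub_distrib]
    have : ∑ l, (M i l - m) * (D l j - D l j')
        = ∑ l, (M i l * D l j - M i l * D l j') - m * ∑ l, (D l j - D l j') := by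
      rw [Finset.mul_sum, ← Finset.sum_sub_distrib]
      apply Finset.sum_congr rfl
      intro l _; ring
    rw [this, hsum0]; ring
  rw [key]
  have step1 : ∑ l, (M i l - m) * (D l j - D l j')
      ≤ ∑ l, c * max (D l j - D l j') 0 := by
    apply Finset.sum_le_sum
    intro l _
    have h1 : 0 ≤ M i l - m := sub_nonneg.2 (hl0 l (Finset.mem_univ l))
    have h2 : M i l - m ≤ c := hM i l l0
    calc (M i l - m) * (D l j - D l j')
        ≤ (M i l - m) * max (D l j - D l j') 0 :=
          mul_le_mul_of_nonneg_left (le_max_left _ _) h1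
      _ ≤ c * max (D l j - D l j') 0 :=
          mul_le_mul_of_nonneg_right h2 (le_max_right _ _)
  refine step1.trans ?_
  rw [← Finset.mul_sum]
  rw [mul_comm (1 - θ) c]
  apply mul_le_mul_of_nonneg_left _ hc
  -- ∑ max(d_l, 0) ≤ 1 - θ
  have hmax : ∀ l : Fin n, max (D l j - D l j') 0
      = ((D l j - D l j') + |D l j - D l j'|) / 2 := by
    intro l
    rcases le_total (D l j - D l j') 0 with h | h
    · rw [max_eq_right h, abs_of_nonpos h]; ring
    · rw [max_eq_left h, abs_of_nonneg h]; ring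
  have hsum0' : ∑ l, (D l j - D l j') = 0 := hsum0
  have habs : ∀ l : Fin n, |D l j - D l j'|
      = D l j + D l j' - 2 * min (D l j) (D l j') := by
    intro l
    rcases le_total (D l j) (D l j') with h | h
    · rw [abs_of_nonpos (by linarith), min_eq_left h]; ring
    · rw [abs_of_nonneg (by linarith), min_eq_right h]; ring
  have hminθ : θ ≤ ∑ l, min (D l j) (D l j') := by
    have hle : ∀ l : Fin n, θ ≤ min (D l j) (D l j') :=
      fun l => le_min (hDθ l j) (hDθ l j')
    calc θ ≤ min (D (⟨0, hn⟩ : Fin n) j) (D ⟨0, hn⟩ j') := hle _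
      _ ≤ ∑ l, min (D l j) (D l j') :=
        Finset.single_le_sum (fun l _ => le_trans hθ (hle l)) (Finset.mem_univ _)
  calc ∑ l, max (D l j - D l j') 0
      = ∑ l, ((D l j - D l j') + |D l j - D l j'|) / 2 :=
        Finset.sum_congr rfl (fun l _ => hmax l)
    _ = (∑ l, (D l j - D l j')) / 2 + (∑ l, |D l j - D l j'|) / 2 := by
        rw [← Finset.sum_div, Finset.sum_add_distrib, add_div]
    _ = (∑ l, |D l j - D l j'|) / 2 := by rw [hsum0']; ring
    _ = (2 - 2 * ∑ l, min (D l j) (D l j')) / 2 := by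
        rw [Finset.sum_congr rfl (fun l _ => habs l), Finset.sum_sub_distrib,
          Finset.sum_add_distrib, hDcol, hDcol, ← Finset.mul_sum]
        norm_num
    _ ≤ 1 - θ := by linarith

lemma osc (hn : 0 < n) (B : ℕ → Matrix (Fin n) (Fin n) ℝ)
    (hnonneg : ∀ k i j, 0 ≤ B k i j) (hcol : ∀ k j, ∑ i, B k i j = 1)
    (T : ℕ) (hT : 1 ≤ T) (θ : ℝ) (hθ0 : 0 < θ) (hθ1 : θ ≤ 1)
    (hpos : ∀ k i j, θ ≤ backProd B T k i j) :
    ∀ t k i j j', backProd B t k i j - backProd B t k i j' ≤ (1 - θ) ^ (t / T) := by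
  intro t
  induction t using Nat.strong_induction_on with
  | _ t ih =>
    intro k i j j'
    rcases lt_or_ge t T with h | h
    · rw [Nat.div_eq_of_lt h, pow_zero]
      have h1 := entry_le_one B hnonneg hcol t k i j
      have h2 := backProd_nonneg B hnonneg t k i j'
      linarith
    · set s := t - T with hs
      have hts : t = s + T := by omega
      have hdecomp : backProd B t k = backProd B s (k + T) * backProd B T k := by
        rw [hts, backProd_add]
      have hdiv : t / T = s / T + 1 := by
        rw [hts, Nat.add_div_right _ (by omega : 0 < T)]
      have hIH : ∀ i j j', backProd B s (k + T) i j - backProd B s (k + T) i j'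
          ≤ (1 - θ) ^ (s / T) := by
        intro i j j'
        exact ih s (by omega) (k + T) i j j'
      have hcpos : (0:ℝ) ≤ (1 - θ) ^ (s / T) := pow_nonneg (by linarith) _
      have := contract hn hcpos (le_of_lt hθ0) hIH
        (fun i j => backProd_nonneg B hnonneg s (k + T) i j)
        (fun i j => hpos k i j) (fun j => backProd_col B hcol T k j) i j j'
      rw [hdecomp, hdiv, pow_succ]
      calc (backProd B s (k + T) * backProd B T k) i j
            - (backProd B s (k + T) * backProd B T k) i j'
          ≤ (1 - θ) * (1 - θ) ^ (s / T) := this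
        _ = (1 - θ) ^ (s / T) * (1 - θ) := by ring

end ColStochAux

/-- **Lemma 2(a) of the paper (column-stochastic version).** Let `{B(k)}` be
column-stochastic matrices such that every entry of every length-`T` backward product
`Φ_T(k)` is at least `θ ∈ (0,1]`. Then for all `k, t` there is a stochastic vector
`φ_t(k)` with `|[Φ_t(k)]_{ij} − [φ_t(k)]_i| ≤ 2(1 − θ)^{⌊t/T⌋}`; i.e. `Φ_t(k)`
approaches the rank-one matrix `φ_t(k)·1ᵀ` geometrically in `t`. -/
theorem col_stochastic_backProd_ergodic (n : ℕ) (hn : 0 < n)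
    (B : ℕ → Matrix (Fin n) (Fin n) ℝ)
    (hnonneg : ∀ k i j, 0 ≤ B k i j)
    (hcol : ∀ k j, ∑ i, B k i j = 1)
    (T : ℕ) (hT : 1 ≤ T) (θ : ℝ) (hθ0 : 0 < θ) (hθ1 : θ ≤ 1)
    (hpos : ∀ k i j, θ ≤ backProd B T k i j) :
    ∀ k t, ∃ φ : Fin n → ℝ, (∀ i, 0 ≤ φ i) ∧ (∑ i, φ i = 1) ∧
      ∀ i j, |backProd B t k i j - φ i| ≤ 2 * (1 - θ) ^ (t / T) := by
  intro k t
  refine ⟨fun i => backProd B t k i ⟨0, hn⟩, ?_, ?_, ?_⟩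
  · exact fun i => ColStochAux.backProd_nonneg B hnonneg t k i _
  · exact ColStochAux.backProd_col B hcol t k _
  · intro i j
    have h1 := ColStochAux.osc hn B hnonneg hcol T hT θ hθ0 hθ1 hpos t k i j ⟨0, hn⟩
    have h2 := ColStochAux.osc hn B hnonneg hcol T hT θ hθ0 hθ1 hpos t k i ⟨0, hn⟩ j
    have hcpos : (0:ℝ) ≤ (1 - θ) ^ (t / T) := pow_nonneg (by linarith) _
    rw [abs_le]
    constructor <;> [linarith; linarith]
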